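/- Let A be an invertible complex n × n matrix that is orthogonally diagonalizable, i.e., A = U Λ Uᵀ with Λ diagonal and UᵀU = Id_n. Let Z be a complex n × k matrix with ZᵀZ = Id_k. If M is a complex k × k matrix such that A Z = Z M, then M is also orthogonally diagonalizable: there exists a complex k × k matrix Q with QᵀQ = Id_k and a diagonal matrix D such that M = Qᵀ D Q. -/

import Mathlib

open Matrix Polynomial

private lemma assemble_ortho (k : ℕ) (M : Matrix (Fin k) (Fin k) ℂ)
    (v : Fin k → Fin k → ℂ) (d : Fin k → ℂ)
    (h1 : ∀ i j, v i ⬝ᵥ v j = if i = j then 1 else 0)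
    (h2 : ∀ i, M.mulVec (v i) = d i • v i) :
    ∃ (Q D : Matrix (Fin k) (Fin k) ℂ), Qᵀ * Q = 1 ∧ D.IsDiag ∧ M = Qᵀ * D * Q := by
  set Q : Matrix (Fin k) (Fin k) ℂ := Matrix.of (fun i j => v i j) with hQdef
  have hQQ : Q * Qᵀ = 1 := by
    ext i j
    simpa [hQdef, Matrix.mul_apply, Matrix.one_apply, dotProduct] using h1 i j
  have hQ : Qᵀ * Q = 1 := mul_eq_one_comm.mp hQQ
  refine ⟨Q, Matrix.diagonal d, hQ, Matrix.isDiag_diagonal d, ?_⟩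
  have hMQ : M * Qᵀ = Qᵀ * Matrix.diagonal d := by
    ext a i
    have h3 : (M * Qᵀ) a i = d i * v i a := by
      simpa [hQdef, Matrix.mul_apply, Matrix.mulVec, dotProduct] using congrFun (h2 i) a
    rw [h3, Matrix.mul_diagonal]
    simp [hQdef, mul_comm]
  calc M = M * (Qᵀ * Q) := by rw [hQ, mul_one]
    _ = (M * Qᵀ) * Q := by rw [mul_assoc]
    _ = Qᵀ * Matrix.diagonal d * Q := by rw [hMQ]

private lemma exists_ortho_eigenbasis (k : ℕ) (M : Matrix (Fin k) (Fin k) ℂ) (hsymm : Mᵀ = M)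
    (p : ℂ[X]) (hp : Squarefree p) (hMp : aeval M p = 0) :
    ∃ (v : Fin k → Fin k → ℂ) (d : Fin k → ℂ),
      (∀ i j, v i ⬝ᵥ v j = if i = j then 1 else 0) ∧ ∀ i, M.mulVec (v i) = d i • v i := by
  classical
  set V := (Fin k → ℂ)
  set f : Module.End ℂ V := Matrix.toLinAlgEquiv' M with hf
  have hfapp : ∀ x, f x = M.mulVec x := fun x => rfl
  have hfp : aeval f p = 0 := by
    have h := Polynomial.aeval_algHom_apply (Matrix.toLinAlgEquiv' (n := Fin k) (R := ℂ)) M p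
    rw [hf, h, hMp, map_zero]
  have hss : f.IsSemisimple := Module.End.isSemisimple_of_squarefree_aeval_eq_zero hp hfp
  have htop : ⨆ μ, f.eigenspace μ = ⊤ := by
    rw [← Module.End.iSup_maxGenEigenspace_eq_top f]
    exact iSup_congr fun μ => (hss.isFinitelySemisimple.maxGenEigenspace_eq_eigenspace μ).symm
  have hint : DirectSum.IsInternal f.eigenspace :=
    DirectSum.isInternal_submodule_of_iSupIndep_of_iSup_eq_top f.eigenspaces_iSupIndep htop
  -- the dot-product bilinear form
  set B : LinearMap.BilinForm ℂ V := LinearMap.mk₂ ℂ (fun x y => x ⬝ᵥ y)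
    (fun x x' y => add_dotProduct x x' y) (fun c x y => smul_dotProduct c x y)
    (fun x y y' => dotProduct_add x y y') (fun c x y => dotProduct_smul c x y) with hBdef
  have hB : ∀ x y, B x y = x ⬝ᵥ y := fun _ _ => rfl
  have hBsymm : B.IsSymm := ⟨fun x y => by simp [hB, dotProduct_comm]⟩
  have hBnd : B.Nondegenerate := by
    refine LinearMap.BilinForm.Nondegenerate.ofSeparatingLeft ?_
    intro x hx
    funext i
    exact (by simpa [hB, dotProduct, Pi.single_apply, mul_ite] using hx (Pi.single i 1) : x i = 0)
  have hadj : ∀ x y, B (f x) y = B x (f y) := by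
    intro x y
    rw [hB, hB, hfapp, hfapp, Matrix.dotProduct_mulVec]
    conv_lhs => rw [← hsymm]
    rw [Matrix.mulVec_transpose]
  have ho : ∀ {μ ν : ℂ}, μ ≠ ν → ∀ x ∈ f.eigenspace μ, ∀ y ∈ f.eigenspace ν, B x y = 0 := by
    intro μ ν hμν x hx y hy
    rw [Module.End.mem_eigenspace_iff] at hx hy
    have h1 : μ * B x y = ν * B x y := by
      have := hadj x y
      rwa [hx, hy, LinearMap.map_smul₂, (B x).map_smul, smul_eq_mul,
        smul_eq_mul] at this
    have h2 : (μ - ν) * B x y = 0 := by linear_combination h1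
    exact (mul_eq_zero.mp h2).resolve_left (sub_ne_zero.mpr hμν)
  -- nondegeneracy of the restriction to each eigenspace
  have hres : ∀ μ : ℂ, (B.restrict (f.eigenspace μ)).Nondegenerate := by
    intro μ
    refine LinearMap.BilinForm.Nondegenerate.ofSeparatingLeft ?_
    intro x hx
    have hxz : ∀ z : V, B (x : V) z = 0 := by
      intro z
      have hz : z ∈ ⨆ ν, f.eigenspace ν := htop ▸ Submodule.mem_top
      refine Submodule.iSup_induction (motive := fun z => B (x : V) z = 0) f.eigenspace hz
        (fun ν y hy => ?_) (by simp)
        (fun y z hy hz => by show B (x : V) (y + z) = 0; rw [map_add, hy, hz, add_zero])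
      rcases eq_or_ne μ ν with rfl | hμν
      · exact hx ⟨y, hy⟩
      · exact ho hμν x x.2 y hy
    exact Subtype.ext (hBnd.1 x hxz)
  haveI : Invertible (2 : ℂ) := invertibleOfNonzero two_ne_zero
  have hressymm : ∀ μ : ℂ, (B.restrict (f.eigenspace μ)).IsSymm := by
    intro μ; refine ⟨fun x y => ?_⟩
    exact hBsymm.eq (x : V) (y : V)
  -- choose an orthogonal basis in each eigenspace
  choose bs hbs using fun μ : ℂ =>
    LinearMap.BilinForm.exists_orthogonal_basis (LinearMap.BilinForm.isSymm_iff.mp (hressymm μ))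
  set b := hint.collectedBasis bs with hbdef
  have hbcoe : ∀ i, (b i : V) = (bs i.1 i.2 : V) := by
    intro i; rw [hbdef, hint.collectedBasis_coe]
  haveI : Fintype ((μ : ℂ) × Fin (Module.finrank ℂ (f.eigenspace μ))) :=
    FiniteDimensional.fintypeBasisIndex b
  have hcard : Fintype.card ((μ : ℂ) × Fin (Module.finrank ℂ (f.eigenspace μ))) = k := by
    rw [← Module.finrank_eq_card_basis b, Module.finrank_fin_fun]
  let e : Fin k ≃ _ := (Fintype.equivFinOfCardEq hcard).symm
  -- eigenvector property
  have heig : ∀ i, M.mulVec (b i : V) = i.1 • (b i : V) := by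
    intro i
    rw [← hfapp]
    have : (b i : V) ∈ f.eigenspace i.1 := hbcoe i ▸ (bs i.1 i.2).2
    exact Module.End.mem_eigenspace_iff.mp this
  -- orthogonality
  have hBb : ∀ i j, i ≠ j → B (b i : V) (b j : V) = 0 := by
    rintro ⟨μ, a⟩ ⟨ν, c⟩ hij
    rcases eq_or_ne μ ν with rfl | hμν
    · have hac : a ≠ c := fun h => hij (by rw [h])
      have := hbs μ hac
      rw [hbcoe, hbcoe]
      exact this
    · exact ho hμν _ ((hbcoe ⟨μ, a⟩) ▸ (bs μ a).2) _ ((hbcoe ⟨ν, c⟩) ▸ (bs ν c).2)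
  -- nonvanishing of diagonal values
  have hBbb : ∀ i, B (b i : V) (b i : V) ≠ 0 := by
    rintro ⟨μ, a⟩
    have := LinearMap.BilinForm.iIsOrtho.not_isOrtho_basis_self_of_nondegenerate
      (hbs μ) (hres μ) a
    rw [hbcoe]
    exact this
  -- choose square roots and normalize
  have hr : ∀ i, ∃ r : ℂ, r ^ 2 = B (b i : V) (b i : V) :=
    fun i => IsAlgClosed.exists_pow_nat_eq _ two_pos
  choose r hr2 using hr
  have hrne : ∀ i, r i ≠ 0 := by
    intro i h
    exact hBbb i (by rw [← hr2 i, h]; ring)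
  refine ⟨fun i => (r (e i))⁻¹ • (b (e i) : V), fun i => (e i).1, ?_, ?_⟩
  · intro i j
    have hdp : (((r (e i))⁻¹ • (b (e i) : V)) ⬝ᵥ ((r (e j))⁻¹ • (b (e j) : V)))
        = (r (e i))⁻¹ * (r (e j))⁻¹ * B (b (e i) : V) (b (e j) : V) := by
      rw [hB]
      rw [smul_dotProduct, dotProduct_smul]
      simp [mul_assoc]
    rcases eq_or_ne i j with rfl | hij
    · rw [hdp, if_pos rfl, ← hr2 (e i)]
      have h := hrne (e i)
      field_simp
    · rw [hdp, hBb _ _ (fun h => hij (e.injective h)), if_neg hij, mul_zero]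
  · intro i
    rw [Matrix.mulVec_smul, heig (e i), smul_comm]

private lemma aeval_diagonal_eq {m : ℕ} (v : Fin m → ℂ) (q : Polynomial ℂ) :
    aeval (Matrix.diagonal v) q = Matrix.diagonal (fun i => q.eval (v i)) := by
  induction q using Polynomial.induction_on' with
  | add q₁ q₂ h₁ h₂ =>
    rw [map_add, h₁, h₂, Matrix.diagonal_add]
    simp [eval_add]
  | monomial a c =>
    rw [aeval_monomial, Matrix.algebraMap_eq_diagonal, Matrix.diagonal_pow,
      Matrix.diagonal_mul_diagonal]
    simp [eval_monomial]

/-- Let `A` be an invertible complex `n × n` matrix which is orthogonally diagonalizable,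
i.e. `A = U Λ Uᵀ` with `Λ` diagonal and `UᵀU = Id`.  Let `Z` be a complex `n × k` matrix
with `ZᵀZ = Id`.  If `M` is a complex `k × k` matrix with `A Z = Z M`, then `M` is also
orthogonally diagonalizable: `M = Qᵀ D Q` with `QᵀQ = Id` and `D` diagonal. -/
theorem orthogonally_diagonalizable_of_compression
    (n k : ℕ) (A : Matrix (Fin n) (Fin n) ℂ) (hA : IsUnit A.det)
    (U Λ : Matrix (Fin n) (Fin n) ℂ) (hU : Uᵀ * U = 1) (hΛ : Λ.IsDiag)
    (hdiag : A = U * Λ * Uᵀ)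
    (Z : Matrix (Fin n) (Fin k) ℂ) (hZ : Zᵀ * Z = 1)
    (M : Matrix (Fin k) (Fin k) ℂ) (hM : A * Z = Z * M) :
    ∃ (Q D : Matrix (Fin k) (Fin k) ℂ), Qᵀ * Q = 1 ∧ D.IsDiag ∧ M = Qᵀ * D * Q := by
  classical
  have hUU : U * Uᵀ = 1 := mul_eq_one_comm.mp hU
  obtain ⟨W, hWdef⟩ : ∃ W : Matrix (Fin n) (Fin k) ℂ, W = Uᵀ * Z := ⟨_, rfl⟩
  have hWT : Wᵀ = Zᵀ * U := by rw [hWdef, Matrix.transpose_mul, Matrix.transpose_transpose]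
  have hW : Wᵀ * W = 1 := by
    rw [hWT, hWdef, Matrix.mul_assoc, ← Matrix.mul_assoc U, hUU, Matrix.one_mul, hZ]
  have hLW : Λ * W = W * M := by
    have h1 : Uᵀ * A = Λ * Uᵀ := by
      rw [hdiag, ← Matrix.mul_assoc, ← Matrix.mul_assoc, hU, Matrix.one_mul]
    calc Λ * W = (Λ * Uᵀ) * Z := by rw [hWdef, Matrix.mul_assoc]
      _ = Uᵀ * (A * Z) := by rw [← h1, Matrix.mul_assoc]
      _ = Uᵀ * Z * M := by rw [hM, Matrix.mul_assoc]
      _ = W * M := by rw [hWdef]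
  have hMW : M = Wᵀ * Λ * W := by
    rw [Matrix.mul_assoc, hLW, ← Matrix.mul_assoc, hW, Matrix.one_mul]
  have hΛT : Λᵀ = Λ := hΛ.isSymm
  have hsymm : Mᵀ = M := by
    rw [hMW]
    rw [Matrix.transpose_mul, Matrix.transpose_mul, Matrix.transpose_transpose, hΛT]
    rw [Matrix.mul_assoc]
  -- powers compress
  have hpow : ∀ j : ℕ, M ^ j = Wᵀ * Λ ^ j * W := by
    intro j
    induction j with
    | zero => rw [pow_zero, pow_zero, Matrix.mul_one, hW]
    | succ j ih =>
      rw [pow_succ, ih, pow_succ]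
      simp only [Matrix.mul_assoc]
      rw [← hLW]
  -- polynomials compress
  have haev : ∀ q : ℂ[X], aeval M q = Wᵀ * aeval Λ q * W := by
    intro q
    induction q using Polynomial.induction_on' with
    | add q₁ q₂ h₁ h₂ =>
      rw [map_add, map_add, h₁, h₂, Matrix.mul_add, Matrix.add_mul]
    | monomial a c =>
      rw [aeval_monomial, aeval_monomial, ← Algebra.smul_def, ← Algebra.smul_def, hpow a,
        Matrix.mul_smul, Matrix.smul_mul]
  -- the annihilating squarefree polynomial
  set s : Finset ℂ := Finset.image (fun i => Λ i i) Finset.univ with hsdef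
  set p : ℂ[X] := ∏ μ ∈ s, (X - C μ) with hpdef
  have hp : Squarefree p := by
    have hsep : p.Separable := by
      rw [hpdef, ← Finset.prod_coe_sort s (fun μ => X - C μ)]
      exact Polynomial.separable_prod_X_sub_C_iff.mpr Subtype.val_injective
    exact hsep.squarefree
  have hΛp : aeval Λ p = 0 := by
    have h1 : aeval Λ p = Matrix.diagonal (fun i => p.eval (Λ.diag i)) := by
      conv_lhs => rw [← hΛ.diagonal_diag]
      exact aeval_diagonal_eq Λ.diag p
    have h2 : ∀ i, p.eval (Λ.diag i) = 0 := by
      intro i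
      rw [hpdef, eval_prod]
      refine Finset.prod_eq_zero (Finset.mem_image_of_mem _ (Finset.mem_univ i)) ?_
      simp [Matrix.diag]
    rw [h1]
    rw [show (fun i => p.eval (Λ.diag i)) = (fun _ => (0 : ℂ)) from funext h2,
      Matrix.diagonal_zero]
  have hMp : aeval M p = 0 := by
    rw [haev, hΛp, Matrix.mul_zero, Matrix.zero_mul]
  obtain ⟨v, d, h1, h2⟩ := exists_ortho_eigenbasis k M hsymm p hp hMp
  exact assemble_ortho k M v d h1 h2
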